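/- arXiv:1601.01852 — 2 statements merged into one kernel-verified Lean document; each statement's English description precedes it below -/
import Mathlib

section
/- Let M_0, M_1, M_2 be the implicit-scheme matrices defined in the context and M̃_2 := (1/β)M_2. If β > 0 and 0 < α_i < 1/(2‖M̃_2‖_2) for every i ∈ {1,…,s}, then the triple {M_0, M_1, M_2} satisfies Condition-M. -/
open Matrix Filter Topology

noncomputable section

/-- Spectral norm (largest singular value) of a real matrix. -/
def specNorm {p q : Type*} [Fintype p] [Fintype q] [DecidableEq q]
    (M : Matrix p q ℝ) : ℝ :=
  ‖LinearMap.toContinuousLinearMap (Matrix.toEuclideanLin M)‖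

/-- The positive semidefinite square root of a positive semidefinite matrix (as in the older
Mathlib, where it was removed since). -/
def Matrix.PosSemidef.sqrt {n : Type*} [Fintype n] [DecidableEq n] {A : Matrix n n ℝ}
    (hA : A.PosSemidef) : Matrix n n ℝ :=
  hA.1.eigenvectorUnitary.1 * diagonal ((↑) ∘ (√·) ∘ hA.1.eigenvalues) *
    (star hA.1.eigenvectorUnitary : Matrix n n ℝ)

/-- Condition-M for a triple of matrices: `M0 = M1 + M2`, `H := M0 + M2` is symmetric
positive definite, and `‖H^{-1/2} M2 H^{-1/2}‖₂ < 1/2` (here `H^{-1/2}` is the positive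
semidefinite square root of `H⁻¹`). -/
def ConditionM {d : Type*} [Fintype d] [DecidableEq d] (M0 M1 M2 : Matrix d d ℝ) : Prop :=
  M0 = M1 + M2 ∧ ∃ hH : (M0 + M2).PosDef,
    specNorm (hH.inv.posSemidef.sqrt * M2 * hH.inv.posSemidef.sqrt) < 1 / 2

/-- The cost functional defining the proximity operator `prox_{φ,H}` at input `x`. -/
def proxCost {ι : Type*} [Fintype ι] (φ : (ι → ℝ) → EReal) (H : Matrix ι ι ℝ)
    (x u : ι → ℝ) : EReal :=
  ((((1 : ℝ) / 2) * ((u - x) ⬝ᵥ H.mulVec (u - x)) : ℝ) : EReal) + φ u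

/-- `p = prox_{φ,H}(x)`: `p` is the unique minimizer of the prox cost. -/
def IsProx {ι : Type*} [Fintype ι] (φ : (ι → ℝ) → EReal) (H : Matrix ι ι ℝ)
    (x p : ι → ℝ) : Prop :=
  (∀ u, proxCost φ H x p ≤ proxCost φ H x u) ∧
  ∀ q, (∀ u, proxCost φ H x q ≤ proxCost φ H x u) → q = p

/-- Proper lower semicontinuous convex extended-real-valued function. -/
def ProperConvexLsc {ι : Type*} [Fintype ι] (f : (ι → ℝ) → EReal) : Prop :=
  (∃ x, f x ≠ ⊤) ∧ (∀ x, f x ≠ ⊥) ∧ LowerSemicontinuous f ∧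
  ∀ x y : ι → ℝ, ∀ t : ℝ, 0 < t → t < 1 →
    f (t • x + (1 - t) • y) ≤ (t : EReal) * f x + ((1 - t : ℝ) : EReal) * f y

/-- Scaling of an extended-real-valued function by a real constant. -/
def smulF {V : Type*} (c : ℝ) (φ : V → EReal) : V → EReal := fun u => (c : EReal) * φ u

/-- The conjugate of the indicator of `C = {b}`: `ι_C*(y) = ⟨y, b⟩`. -/
def iotaCstar {m : ℕ} (b : Fin m → ℝ) : (Fin m → ℝ) → EReal :=
  fun y => ((y ⬝ᵥ b : ℝ) : EReal)

variable {s m : ℕ} {n : Fin s → ℕ}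

/-- Index type for the concatenated variable `x = (x_1, …, x_s)`. -/
abbrev XIdx (n : Fin s → ℕ) := (i : Fin s) × Fin (n i)

/-- Index type for the full variable `v = (x, y)`. -/
abbrev FIdx (n : Fin s → ℕ) (m : ℕ) := XIdx n ⊕ Fin m

/-- The `i`-th block of a concatenated vector. -/
def blk (x : XIdx n → ℝ) (i : Fin s) : Fin (n i) → ℝ := fun j => x ⟨i, j⟩

/-- The matrix `A = [A_1 … A_s]`. -/
def bigA (A : ∀ i : Fin s, Matrix (Fin m) (Fin (n i)) ℝ) : Matrix (Fin m) (XIdx n) ℝ :=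
  Matrix.of fun r p => A p.1 r p.2

/-- The separable objective `∑ f_i(x_i)`. -/
def objSum (f : ∀ i : Fin s, (Fin (n i) → ℝ) → EReal) (x : XIdx n → ℝ) : EReal :=
  ∑ i, f i (blk x i)

/-- `∑ A_i x_i`. -/
def sumAx (A : ∀ i : Fin s, Matrix (Fin m) (Fin (n i)) ℝ) (x : XIdx n → ℝ) : Fin m → ℝ :=
  ∑ i, (A i).mulVec (blk x i)

/-- `x` is a solution of problem (P). -/
def IsSolution (f : ∀ i : Fin s, (Fin (n i) → ℝ) → EReal)
    (A : ∀ i : Fin s, Matrix (Fin m) (Fin (n i)) ℝ) (b : Fin m → ℝ)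
    (x : XIdx n → ℝ) : Prop :=
  sumAx A x = b ∧ ∀ z : XIdx n → ℝ, sumAx A z = b → objSum f x ≤ objSum f z

/-- `b ∈ A(ri(dom(∑ f_i)))` where `ri` is the relative (intrinsic) interior. -/
def RiCond (f : ∀ i : Fin s, (Fin (n i) → ℝ) → EReal)
    (A : ∀ i : Fin s, Matrix (Fin m) (Fin (n i)) ℝ) (b : Fin m → ℝ) : Prop :=
  b ∈ (fun x => sumAx A x) '' intrinsicInterior ℝ {x : XIdx n → ℝ | objSum f x ≠ ⊤}

/-- The `x`-part of a full vector. -/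
def xpart (v : FIdx n m → ℝ) : XIdx n → ℝ := fun p => v (Sum.inl p)

/-- The `y`-part of a full vector. -/
def ypart (v : FIdx n m → ℝ) : Fin m → ℝ := fun r => v (Sum.inr r)

/-- The function `Φ(x_1,…,x_s,y) = ∑ f_i(x_i) + ι_C*(y)`. -/
def PhiFun (f : ∀ i : Fin s, (Fin (n i) → ℝ) → EReal) (b : Fin m → ℝ)
    (v : FIdx n m → ℝ) : EReal :=
  objSum f (xpart v) + iotaCstar b (ypart v)

/-- The diagonal matrix `R = diag((β/α_1)I, …, (β/α_s)I, (1/β)I)`. -/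
def Rmat (α : Fin s → ℝ) (β : ℝ) : Matrix (FIdx n m) (FIdx n m) ℝ :=
  Matrix.diagonal (Sum.elim (fun p : XIdx n => β / α p.1) fun _ => 1 / β)

/-- The inverse `R⁻¹` of the diagonal matrix `R`. -/
def Rinv (α : Fin s → ℝ) (β : ℝ) : Matrix (FIdx n m) (FIdx n m) ℝ :=
  Matrix.diagonal (Sum.elim (fun p : XIdx n => α p.1 / β) fun _ => β)

/-- The expansive matrix `E = [[I, −P⁻¹Aᵀ],[βA, I]]`. -/
def Emat (A : ∀ i : Fin s, Matrix (Fin m) (Fin (n i)) ℝ) (α : Fin s → ℝ) (β : ℝ) :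
    Matrix (FIdx n m) (FIdx n m) ℝ :=
  Matrix.fromBlocks 1 (-(Matrix.diagonal (fun p : XIdx n => α p.1 / β) * (bigA A)ᵀ))
    (β • bigA A) 1

/-- The skew-symmetric matrix `S_A = [[0, −Aᵀ],[A, 0]]`. -/
def SAmat (A : ∀ i : Fin s, Matrix (Fin m) (Fin (n i)) ℝ) :
    Matrix (FIdx n m) (FIdx n m) ℝ :=
  Matrix.fromBlocks 0 (-(bigA A)ᵀ) (bigA A) 0

/-- `w = 𝒯(v)`, where `𝒯(x_1,…,x_s,y) = (prox_{(α_1/β)f_1}x_1, …, prox_{(α_s/β)f_s}x_s,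
prox_{β ι_C*}y)`. -/
def isT (f : ∀ i : Fin s, (Fin (n i) → ℝ) → EReal) (b : Fin m → ℝ)
    (α : Fin s → ℝ) (β : ℝ) (v w : FIdx n m → ℝ) : Prop :=
  (∀ i, IsProx (smulF (α i / β) (f i)) 1 (blk (xpart v) i) (blk (xpart w) i)) ∧
  IsProx (smulF β (iotaCstar b)) 1 (ypart v) (ypart w)

/-- `w = T_ℳ(u₁, u₂)`, i.e. `w = 𝒯((E − R⁻¹M₀)w + R⁻¹M₁u₁ + R⁻¹M₂u₂)`. -/
def isTM (f : ∀ i : Fin s, (Fin (n i) → ℝ) → EReal)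
    (A : ∀ i : Fin s, Matrix (Fin m) (Fin (n i)) ℝ) (b : Fin m → ℝ)
    (α : Fin s → ℝ) (β : ℝ) (M0 M1 M2 : Matrix (FIdx n m) (FIdx n m) ℝ)
    (u1 u2 w : FIdx n m → ℝ) : Prop :=
  isT f b α β ((Emat A α β - Rinv α β * M0).mulVec w + (Rinv α β * M1).mulVec u1
    + (Rinv α β * M2).mulVec u2) w

/-- `T_ℳ` is well-defined. -/
def TMWellDefined (f : ∀ i : Fin s, (Fin (n i) → ℝ) → EReal)
    (A : ∀ i : Fin s, Matrix (Fin m) (Fin (n i)) ℝ) (b : Fin m → ℝ)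
    (α : Fin s → ℝ) (β : ℝ) (M0 M1 M2 : Matrix (FIdx n m) (FIdx n m) ℝ) : Prop :=
  ∀ u1 u2 : FIdx n m → ℝ, ∃! w, isTM f A b α β M0 M1 M2 u1 u2 w


/-- The matrix `M₂` (same for the implicit and explicit schemes): `(i,j)` block
`βA_iᵀA_j` for `i < j`, all other blocks zero. -/
def M2mat {s m : ℕ} {n : Fin s → ℕ} (A : ∀ i : Fin s, Matrix (Fin m) (Fin (n i)) ℝ)
    (β : ℝ) : Matrix (FIdx n m) (FIdx n m) ℝ :=
  Matrix.fromBlocks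
    (Matrix.of fun p q : XIdx n =>
      if p.1 < q.1 then β * ∑ r, A p.1 r p.2 * A q.1 r q.2 else 0) 0 0 0

/-- The implicit-scheme matrix `M₀`: diagonal blocks `(β/α_i)I` and `(1/β)I`, `(i,j)` block
`−βA_iᵀA_j` for `i < j`. -/
def M0imp {s m : ℕ} {n : Fin s → ℕ} (A : ∀ i : Fin s, Matrix (Fin m) (Fin (n i)) ℝ)
    (α : Fin s → ℝ) (β : ℝ) : Matrix (FIdx n m) (FIdx n m) ℝ :=
  Matrix.fromBlocks
    (Matrix.of fun p q : XIdx n =>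
      (if p = q then β / α p.1 else 0) +
      (if p.1 < q.1 then -(β * ∑ r, A p.1 r p.2 * A q.1 r q.2) else 0))
    0 0 ((1 / β) • 1)

/-- The implicit-scheme matrix `M₁`: diagonal blocks `(β/α_i)I` and `(1/β)I`, `(i,j)` block
`−2βA_iᵀA_j` for `i < j`. -/
def M1imp {s m : ℕ} {n : Fin s → ℕ} (A : ∀ i : Fin s, Matrix (Fin m) (Fin (n i)) ℝ)
    (α : Fin s → ℝ) (β : ℝ) : Matrix (FIdx n m) (FIdx n m) ℝ :=
  Matrix.fromBlocks
    (Matrix.of fun p q : XIdx n =>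
      (if p = q then β / α p.1 else 0) +
      (if p.1 < q.1 then -(2 * β * ∑ r, A p.1 r p.2 * A q.1 r q.2) else 0))
    0 0 ((1 / β) • 1)

section helpers
open scoped Matrix.Norms.L2Operator


lemma specNorm_eq_norm' {p q : Type*} [Fintype p] [Fintype q] [DecidableEq q]
    (M : Matrix p q ℝ) : specNorm M = ‖M‖ := rfl

lemma specNorm_nonneg' {p q : Type*} [Fintype p] [Fintype q] [DecidableEq q]
    (M : Matrix p q ℝ) : 0 ≤ specNorm M := by
  rw [specNorm_eq_norm']; exact norm_nonneg M

lemma specNorm_zero' {p q : Type*} [Fintype p] [Fintype q] [DecidableEq q] :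
    specNorm (0 : Matrix p q ℝ) = 0 := by
  rw [specNorm_eq_norm']; exact norm_zero

lemma specNorm_mul_le' {p q r : Type*} [Fintype p] [Fintype q] [Fintype r]
    [DecidableEq q] [DecidableEq r] (A : Matrix p q ℝ) (B : Matrix q r ℝ) :
    specNorm (A * B) ≤ specNorm A * specNorm B := Matrix.l2_opNorm_mul A B

lemma specNorm_smul' {p q : Type*} [Fintype p] [Fintype q] [DecidableEq q]
    (c : ℝ) (M : Matrix p q ℝ) : specNorm (c • M) = |c| * specNorm M := by
  rw [specNorm_eq_norm', specNorm_eq_norm', norm_smul, Real.norm_eq_abs]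

lemma specNorm_diagonal_le' {ι : Type*} [Fintype ι] [DecidableEq ι] {d : ι → ℝ} {c : ℝ}
    (hc : 0 ≤ c) (h : ∀ i, |d i| ≤ c) : specNorm (Matrix.diagonal d) ≤ c := by
  refine ContinuousLinearMap.opNorm_le_bound _ hc fun x => ?_
  have hx : (LinearMap.toContinuousLinearMap (Matrix.toEuclideanLin (Matrix.diagonal d))) x
      = (WithLp.equiv 2 (ι → ℝ)).symm (Matrix.diagonal d *ᵥ (WithLp.equiv 2 (ι → ℝ)) x) := rfl
  rw [hx, EuclideanSpace.norm_eq, EuclideanSpace.norm_eq]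
  have hsum : ∑ i, ‖((WithLp.equiv 2 (ι → ℝ)).symm
        (Matrix.diagonal d *ᵥ (WithLp.equiv 2 (ι → ℝ)) x)) i‖ ^ 2
      ≤ c ^ 2 * ∑ i, ‖x i‖ ^ 2 := by
    rw [Finset.mul_sum]
    refine Finset.sum_le_sum fun i _ => ?_
    have hentry : ((WithLp.equiv 2 (ι → ℝ)).symm
        (Matrix.diagonal d *ᵥ (WithLp.equiv 2 (ι → ℝ)) x)) i = d i * x i := by
      simp [Matrix.mulVec_diagonal]
    rw [hentry]
    calc ‖d i * x i‖ ^ 2 ≤ (c * ‖x i‖) ^ 2 := by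
          refine pow_le_pow_left₀ (norm_nonneg _) ?_ 2
          rw [norm_mul, Real.norm_eq_abs (d i)]
          exact mul_le_mul_of_nonneg_right (h i) (norm_nonneg _)
      _ = c ^ 2 * ‖x i‖ ^ 2 := by ring
  calc Real.sqrt (∑ i, ‖((WithLp.equiv 2 (ι → ℝ)).symm
        (Matrix.diagonal d *ᵥ (WithLp.equiv 2 (ι → ℝ)) x)) i‖ ^ 2)
      ≤ Real.sqrt (c ^ 2 * ∑ i, ‖x i‖ ^ 2) := Real.sqrt_le_sqrt hsum
    _ = c * Real.sqrt (∑ i, ‖x i‖ ^ 2) := by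
        rw [Real.sqrt_mul (sq_nonneg c), Real.sqrt_sq hc]

end helpers

section mainproof
open scoped Matrix.Norms.L2Operator

/-- if `β > 0` and `0 < α_i < 1/(2‖M̃₂‖₂)` where `M̃₂ = (1/β)M₂`, then the
implicit-scheme matrices `{M₀, M₁, M₂}` satisfy Condition-M. -/
theorem implicit_matrices_conditionM {s m : ℕ} {n : Fin s → ℕ}
    (A : ∀ i : Fin s, Matrix (Fin m) (Fin (n i)) ℝ)
    (α : Fin s → ℝ) (β : ℝ) (hβ : 0 < β)
    (hα : ∀ i, 0 < α i ∧ α i < 1 / (2 * specNorm ((1 / β) • M2mat A β))) :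
    ConditionM (M0imp A α β) (M1imp A α β) (M2mat A β) := by

  classical
  have hβ' : β ≠ 0 := ne_of_gt hβ
  -- M0 = M1 + M2
  have hM01 : M0imp A α β = M1imp A α β + M2mat A β := by
    ext i j
    rcases i with p | r <;> rcases j with q | r' <;>
      simp [M0imp, M1imp, M2mat, Matrix.fromBlocks, Matrix.add_apply, Matrix.of_apply] <;>
      split_ifs <;> ring
  -- H = M0 + M2 is the diagonal matrix
  set dvec : (FIdx n m) → ℝ := Sum.elim (fun p : XIdx n => β / α p.1) (fun _ => 1 / β)
    with hdvec
  have hHeq : M0imp A α β + M2mat A β = Matrix.diagonal dvec := by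
    ext i j
    rcases i with p | r <;> rcases j with q | r' <;>
      simp [M0imp, M2mat, Matrix.fromBlocks, Matrix.add_apply, Matrix.of_apply,
        Matrix.diagonal_apply, Matrix.one_apply, Matrix.smul_apply, hdvec] <;>
      split_ifs <;> simp_all <;> ring
  have hdpos : ∀ i, 0 < dvec i := by
    rintro (p | r)
    · simp only [hdvec, Sum.elim_inl]
      exact div_pos hβ (hα p.1).1
    · simp only [hdvec, Sum.elim_inr]
      exact one_div_pos.mpr hβ
  have hHpd : (Matrix.diagonal dvec).PosDef := Matrix.posDef_diagonal_iff.mpr hdpos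
  have hH' : (M0imp A α β + M2mat A β).PosDef := by rw [hHeq]; exact hHpd
  -- the inverse
  have hinv : (M0imp A α β + M2mat A β)⁻¹ = Matrix.diagonal (fun i => (dvec i)⁻¹) := by
    rw [hHeq]
    refine Matrix.inv_eq_left_inv ?_
    rw [Matrix.diagonal_mul_diagonal]
    have hfe : (fun i => (dvec i)⁻¹ * dvec i) = fun _ : FIdx n m => (1 : ℝ) :=
      funext fun i => inv_mul_cancel₀ (hdpos i).ne'
    rw [hfe, Matrix.diagonal_one]
  -- the sqrt of the inverse
  set evec : (FIdx n m) → ℝ := fun i => Real.sqrt (dvec i)⁻¹ with hevec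
  have hepsd : (Matrix.diagonal evec).PosSemidef :=
    Matrix.posSemidef_diagonal_iff.mpr fun i => Real.sqrt_nonneg _
  have hsq : hH'.inv.posSemidef.sqrt = Matrix.diagonal evec := by
    have hkey : ∀ {B : Matrix (FIdx n m) (FIdx n m) ℝ} (hB : B.PosSemidef),
        hB.sqrt = cfc Real.sqrt B := by
      intro B hB
      rw [hB.1.cfc_eq]
      simp [Matrix.PosSemidef.sqrt, Matrix.IsHermitian.cfc, Unitary.conjStarAlgAut_apply]
      rfl
    rw [hkey]
    have hsq2 : (M0imp A α β + M2mat A β)⁻¹ = Matrix.diagonal evec ^ 2 := by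
      rw [hinv, pow_two, Matrix.diagonal_mul_diagonal]
      have hfe : (fun i => evec i * evec i) = fun i => (dvec i)⁻¹ :=
        funext fun i => Real.mul_self_sqrt (inv_nonneg.mpr (hdpos i).le)
      rw [hfe]
    have hsa : IsSelfAdjoint (Matrix.diagonal evec) := hepsd.1
    rw [hsq2, ← cfc_comp_pow Real.sqrt 2 (Matrix.diagonal evec)]
    have hspec : ∀ x ∈ spectrum ℝ (Matrix.diagonal evec), 0 ≤ x := by
      rw [hepsd.1.spectrum_real_eq_range_eigenvalues]
      rintro _ ⟨i, rfl⟩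
      exact hepsd.eigenvalues_nonneg i
    rw [cfc_congr (f := fun x => √(x ^ 2)) (g := id) (fun x hx => Real.sqrt_sq (hspec x hx)), cfc_id ℝ _]
  refine ⟨hM01, hH', ?_⟩
  rw [hsq]
  -- replace evec by e0 which vanishes on the y-part
  set e0 : (FIdx n m) → ℝ := Sum.elim (fun p : XIdx n => Real.sqrt (α p.1 / β)) (fun _ => 0)
    with he0
  have hD0 : Matrix.diagonal evec * M2mat A β * Matrix.diagonal evec
      = Matrix.diagonal e0 * M2mat A β * Matrix.diagonal e0 := by
    ext i j
    rw [Matrix.mul_diagonal, Matrix.mul_diagonal, Matrix.diagonal_mul, Matrix.diagonal_mul]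
    rcases i with p | r <;> rcases j with q | r'
    · have h1 : ∀ p' : XIdx n, evec (Sum.inl p') = e0 (Sum.inl p') := by
        intro p'
        simp only [hevec, he0, hdvec, Sum.elim_inl, inv_div]
      rw [h1 p, h1 q]
    · simp [M2mat, Matrix.fromBlocks]
    · simp [M2mat, Matrix.fromBlocks]
    · simp [M2mat, Matrix.fromBlocks]
  rw [hD0]
  set N := specNorm ((1 / β) • M2mat A β) with hN
  have hNnn : 0 ≤ N := specNorm_nonneg' _
  have hM2norm : specNorm (M2mat A β) = β * N := by
    have hre : (β : ℝ) • ((1 / β) • M2mat A β) = M2mat A β := by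
      rw [smul_smul]
      field_simp
      exact one_smul _ _
    calc specNorm (M2mat A β) = specNorm (β • ((1 / β) • M2mat A β)) := by rw [hre]
      _ = |β| * N := specNorm_smul' _ _
      _ = β * N := by rw [abs_of_pos hβ]
  have key : specNorm (Matrix.diagonal e0 * M2mat A β * Matrix.diagonal e0)
      ≤ specNorm (Matrix.diagonal e0) * specNorm (M2mat A β) * specNorm (Matrix.diagonal e0) :=
    calc specNorm (Matrix.diagonal e0 * M2mat A β * Matrix.diagonal e0)
        ≤ specNorm (Matrix.diagonal e0 * M2mat A β) * specNorm (Matrix.diagonal e0) :=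
          specNorm_mul_le' _ _
      _ ≤ specNorm (Matrix.diagonal e0) * specNorm (M2mat A β) * specNorm (Matrix.diagonal e0) :=
          mul_le_mul_of_nonneg_right (specNorm_mul_le' _ _) (specNorm_nonneg' _)
  rcases eq_or_lt_of_le hNnn with hN0 | hNpos
  · -- N = 0
    rw [hM2norm, ← hN0] at key
    simp only [mul_zero, zero_mul] at key
    have := specNorm_nonneg' (Matrix.diagonal e0 * M2mat A β * Matrix.diagonal e0)
    linarith
  · -- N > 0
    have hs : Nonempty (Fin s) := by
      by_contra hs
      have hz : M2mat A β = 0 := by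
        ext i j
        rcases i with p | r
        · exact absurd ⟨p.1⟩ hs
        · rcases j with q | r' <;> simp [M2mat, Matrix.fromBlocks]
      rw [hz, smul_zero] at hN
      rw [specNorm_zero'] at hN
      rw [hN] at hNpos
      exact lt_irrefl 0 hNpos
    have hune : (Finset.univ : Finset (Fin s)).Nonempty := Finset.univ_nonempty
    set amax := Finset.univ.sup' hune α with hamax
    obtain ⟨i0, -, hi0⟩ := Finset.exists_mem_eq_sup' hune α
    have hamax_lt : amax < 1 / (2 * N) := by rw [hamax, hi0]; exact (hα i0).2
    have hamax_pos : 0 < amax := by rw [hamax, hi0]; exact (hα i0).1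
    set c := Real.sqrt (amax / β) with hc
    have hcnn : 0 ≤ c := Real.sqrt_nonneg _
    have hc2 : c ^ 2 = amax / β := Real.sq_sqrt (div_nonneg hamax_pos.le hβ.le)
    have hD0le : specNorm (Matrix.diagonal e0) ≤ c := by
      refine specNorm_diagonal_le' hcnn ?_
      rintro (p | r)
      · rw [show e0 (Sum.inl p) = Real.sqrt (α p.1 / β) by rw [he0, Sum.elim_inl],
          abs_of_nonneg (Real.sqrt_nonneg _)]
        exact Real.sqrt_le_sqrt ((div_le_div_iff_of_pos_right hβ).mpr (Finset.le_sup' α (Finset.mem_univ p.1)))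
      · rw [show e0 (Sum.inr r) = 0 by rw [he0, Sum.elim_inr], abs_zero]
        exact hcnn
    have hβN : (0 : ℝ) ≤ β * N := mul_nonneg hβ.le hNnn
    calc specNorm (Matrix.diagonal e0 * M2mat A β * Matrix.diagonal e0)
        ≤ specNorm (Matrix.diagonal e0) * specNorm (M2mat A β) * specNorm (Matrix.diagonal e0) :=
          key
      _ ≤ c * (β * N) * c := by
          rw [hM2norm]
          exact mul_le_mul (mul_le_mul_of_nonneg_right hD0le hβN) hD0le (specNorm_nonneg' _)
            (mul_nonneg hcnn hβN)
      _ = amax * N := by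
          rw [show c * (β * N) * c = c ^ 2 * (β * N) by ring, hc2]
          field_simp
      _ < 1 / (2 * N) * N := mul_lt_mul_of_pos_right hamax_lt hNpos
      _ = 1 / 2 := by field_simp

end mainproof

end
end

section
/- Let M_0, M_1, M_2 be the explicit-scheme matrices defined in the context and M̃_2 := (1/β)M_2. If β > 0 and 0 < α_i < 1/(‖A_i‖_2² + 2‖M̃_2‖_2) for every i ∈ {1,…,s}, then the triple {M_0, M_1, M_2} satisfies Condition-M. -/
open Matrix Filter Topology

noncomputable section

variable {s m : ℕ} {n : Fin s → ℕ}

/-- The explicit-scheme matrix `M₀`: diagonal blocks `(β/α_i)I − βA_iᵀA_i` and `(1/β)I`,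
`(i,j)` block `−βA_iᵀA_j` for `i < j`. -/
def M0exp {s m : ℕ} {n : Fin s → ℕ} (A : ∀ i : Fin s, Matrix (Fin m) (Fin (n i)) ℝ)
    (α : Fin s → ℝ) (β : ℝ) : Matrix (FIdx n m) (FIdx n m) ℝ :=
  Matrix.fromBlocks
    (Matrix.of fun p q : XIdx n =>
      (if p = q then β / α p.1 else 0) +
      (if p.1 ≤ q.1 then -(β * ∑ r, A p.1 r p.2 * A q.1 r q.2) else 0))
    0 0 ((1 / β) • 1)

/-- The explicit-scheme matrix `M₁`: diagonal blocks `(β/α_i)I − βA_iᵀA_i` and `(1/β)I`,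
`(i,j)` block `−2βA_iᵀA_j` for `i < j`. -/
def M1exp {s m : ℕ} {n : Fin s → ℕ} (A : ∀ i : Fin s, Matrix (Fin m) (Fin (n i)) ℝ)
    (α : Fin s → ℝ) (β : ℝ) : Matrix (FIdx n m) (FIdx n m) ℝ :=
  Matrix.fromBlocks
    (Matrix.of fun p q : XIdx n =>
      (if p = q then β / α p.1 else 0) +
      (if p.1 ≤ q.1 then -(β * ∑ r, A p.1 r p.2 * A q.1 r q.2) else 0) +
      (if p.1 < q.1 then -(β * ∑ r, A p.1 r p.2 * A q.1 r q.2) else 0))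
    0 0 ((1 / β) • 1)


/-! ### Auxiliary lemmas for the proof of `explicit_matrices_conditionM`. -/

section SqrtAux
open scoped MatrixOrder

variable {N : Type*} [Fintype N] [DecidableEq N]

lemma Matrix.PosSemidef.sqrt_eq_cfc {A : Matrix N N ℝ} (hA : A.PosSemidef) :
    hA.sqrt = CFC.sqrt A := by
  rw [CFC.sqrt_eq_real_sqrt A hA.nonneg,
    cfcₙ_eq_cfc (hf := Real.continuous_sqrt.continuousOn) (hf0 := Real.sqrt_zero), hA.1.cfc_eq, Matrix.IsHermitian.cfc,
    Unitary.conjStarAlgAut_apply]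
  rfl

lemma Matrix.PosSemidef.posSemidef_sqrt {A : Matrix N N ℝ} (hA : A.PosSemidef) :
    hA.sqrt.PosSemidef := by
  rw [hA.sqrt_eq_cfc]
  exact Matrix.nonneg_iff_posSemidef.mp (CFC.sqrt_nonneg A)

lemma Matrix.PosSemidef.sqrt_mul_self {A : Matrix N N ℝ} (hA : A.PosSemidef) :
    hA.sqrt * hA.sqrt = A := by
  rw [hA.sqrt_eq_cfc]
  exact CFC.sqrt_mul_sqrt_self A hA.nonneg

lemma Matrix.PosSemidef.eq_sqrt_of_sq_eq {A B : Matrix N N ℝ} (hB : B.PosSemidef)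
    (hA : A.PosSemidef) (h : B ^ 2 = A) : B = hA.sqrt := by
  rw [hA.sqrt_eq_cfc]
  exact (CFC.sqrt_unique (by rw [← h, sq]) hB.nonneg).symm

end SqrtAux

section SpecNormAux
open scoped Matrix.Norms.L2Operator
set_option linter.unusedSectionVars false

variable {ι κ : Type*} [Fintype ι] [Fintype κ] [DecidableEq ι] [DecidableEq κ]

lemma specNorm_eq_norm (M : Matrix κ ι ℝ) : specNorm M = ‖M‖ := rfl

lemma specNorm_nonneg (M : Matrix κ ι ℝ) : 0 ≤ specNorm M := norm_nonneg _

lemma specNorm_smul (c : ℝ) (M : Matrix κ ι ℝ) : specNorm (c • M) = |c| * specNorm M := by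
  rw [specNorm_eq_norm, specNorm_eq_norm, norm_smul, Real.norm_eq_abs]

lemma norm_sq_eq_dot (v : EuclideanSpace ℝ ι) :
    ‖v‖ ^ 2 = (WithLp.equiv 2 (ι → ℝ) v) ⬝ᵥ (WithLp.equiv 2 (ι → ℝ) v) := by
  rw [EuclideanSpace.norm_eq, Real.sq_sqrt (by positivity)]
  simp [dotProduct, Real.norm_eq_abs, sq_abs, pow_two]

lemma dot_self_nonneg (v : ι → ℝ) : 0 ≤ v ⬝ᵥ v :=
  Finset.sum_nonneg fun _ _ => mul_self_nonneg _

lemma dot_mulVec_le (M : Matrix κ ι ℝ) (x : ι → ℝ) :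
    (M *ᵥ x) ⬝ᵥ (M *ᵥ x) ≤ specNorm M ^ 2 * (x ⬝ᵥ x) := by
  have h := (LinearMap.toContinuousLinearMap (Matrix.toEuclideanLin M)).le_opNorm
    ((WithLp.equiv 2 (ι → ℝ)).symm x)
  have h2 := mul_self_le_mul_self (norm_nonneg _) h
  rw [← pow_two, ← pow_two] at h2
  rw [mul_pow] at h2
  have e1 : (LinearMap.toContinuousLinearMap (Matrix.toEuclideanLin M))
      ((WithLp.equiv 2 (ι → ℝ)).symm x) = (WithLp.equiv 2 (κ → ℝ)).symm (M *ᵥ x) := by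
    simp [LinearMap.coe_toContinuousLinearMap']
  rw [e1, norm_sq_eq_dot, norm_sq_eq_dot] at h2
  simpa [specNorm] using h2

lemma specNorm_le_of {M : Matrix κ ι ℝ} {t : ℝ} (ht : 0 ≤ t)
    (h : ∀ x : ι → ℝ, (M *ᵥ x) ⬝ᵥ (M *ᵥ x) ≤ t ^ 2 * (x ⬝ᵥ x)) : specNorm M ≤ t := by
  apply ContinuousLinearMap.opNorm_le_bound _ ht
  intro v
  have h1 := h ((WithLp.equiv 2 (ι → ℝ)) v)
  have e1 : (LinearMap.toContinuousLinearMap (Matrix.toEuclideanLin M)) v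
      = (WithLp.equiv 2 (κ → ℝ)).symm (M *ᵥ (WithLp.equiv 2 (ι → ℝ)) v) := rfl
  have hnn : (0:ℝ) ≤ t * ‖v‖ := mul_nonneg ht (norm_nonneg _)
  rw [← pow_le_pow_iff_left₀ (norm_nonneg _) hnn two_ne_zero, e1, norm_sq_eq_dot, mul_pow,
    norm_sq_eq_dot]
  simpa using h1

lemma dot_sq_le (u v : ι → ℝ) : (u ⬝ᵥ v) ^ 2 ≤ (u ⬝ᵥ u) * (v ⬝ᵥ v) := by
  have := Finset.sum_mul_sq_le_sq_mul_sq Finset.univ u v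
  simpa [dotProduct, pow_two] using this

lemma dot_sum (u v : ι ⊕ κ → ℝ) :
    u ⬝ᵥ v = (u ∘ Sum.inl) ⬝ᵥ (v ∘ Sum.inl) + (u ∘ Sum.inr) ⬝ᵥ (v ∘ Sum.inr) := by
  rw [dotProduct, Fintype.sum_sum_type]; rfl

lemma specNorm_fromBlocks_le (P : Matrix ι ι ℝ) :
    specNorm (Matrix.fromBlocks P 0 0 (0 : Matrix κ κ ℝ)) ≤ specNorm P := by
  refine specNorm_le_of (specNorm_nonneg _) fun x => ?_
  rw [Matrix.fromBlocks_mulVec]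
  simp only [Matrix.zero_mulVec, add_zero, zero_add]
  rw [dot_sum]
  simp only [Sum.elim_comp_inl, Sum.elim_comp_inr, zero_dotProduct]
  calc (P *ᵥ (x ∘ Sum.inl)) ⬝ᵥ (P *ᵥ (x ∘ Sum.inl)) + 0
      ≤ specNorm P ^ 2 * ((x ∘ Sum.inl) ⬝ᵥ (x ∘ Sum.inl)) := by
        simpa using dot_mulVec_le P (x ∘ Sum.inl)
    _ ≤ specNorm P ^ 2 * (x ⬝ᵥ x) := by
        rw [dot_sum x x]
        have := dot_self_nonneg (x ∘ Sum.inr)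
        nlinarith [sq_nonneg (specNorm P), dot_self_nonneg (x ∘ Sum.inl)]

lemma specNorm_le_fromBlocks (P : Matrix ι ι ℝ) :
    specNorm P ≤ specNorm (Matrix.fromBlocks P 0 0 (0 : Matrix κ κ ℝ)) := by
  refine specNorm_le_of (specNorm_nonneg _) fun x => ?_
  have h := dot_mulVec_le (Matrix.fromBlocks P 0 0 (0 : Matrix κ κ ℝ)) (Sum.elim x 0)
  rw [Matrix.fromBlocks_mulVec, dot_sum, dot_sum (Sum.elim x 0)] at h
  simp only [Sum.elim_comp_inl, Sum.elim_comp_inr, Matrix.zero_mulVec, add_zero, zero_add,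
    zero_dotProduct, dotProduct_zero] at h
  simpa using h

lemma star_pi_real (x : ι → ℝ) : star x = x := funext fun _ => star_trivial _

lemma herm_transpose {M : Matrix ι ι ℝ} (h : M.IsHermitian) : Mᵀ = M := by
  ext i j
  calc Mᵀ i j = M j i := rfl
    _ = star (M j i) := (star_trivial _).symm
    _ = Mᴴ i j := rfl
    _ = M i j := by rw [h.eq]

lemma posSemidef_fromBlocks_diag {P : Matrix ι ι ℝ} {Q : Matrix κ κ ℝ}
    (hP : P.PosSemidef) (hQ : Q.PosSemidef) :
    (Matrix.fromBlocks P 0 0 Q).PosSemidef := by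
  rw [Matrix.posSemidef_iff_dotProduct_mulVec]
  constructor
  · simp only [Matrix.IsHermitian, Matrix.fromBlocks_conjTranspose,
      Matrix.conjTranspose_zero, hP.1.eq, hQ.1.eq]
  · intro x
    rw [star_pi_real, Matrix.fromBlocks_mulVec, dot_sum]
    simp only [Sum.elim_comp_inl, Sum.elim_comp_inr, Matrix.zero_mulVec, add_zero, zero_add]
    have h1 := hP.dotProduct_mulVec_nonneg (x ∘ Sum.inl)
    have h2 := hQ.dotProduct_mulVec_nonneg (x ∘ Sum.inr)
    rw [star_pi_real] at h1 h2
    exact add_nonneg h1 h2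

lemma posDef_fromBlocks_diag {P : Matrix ι ι ℝ} {Q : Matrix κ κ ℝ}
    (hP : P.PosDef) (hQ : Q.PosDef) :
    (Matrix.fromBlocks P 0 0 Q).PosDef := by
  rw [Matrix.posDef_iff_dotProduct_mulVec]
  constructor
  · simp only [Matrix.IsHermitian, Matrix.fromBlocks_conjTranspose,
      Matrix.conjTranspose_zero, hP.1.eq, hQ.1.eq]
  · intro x hx
    rw [star_pi_real, Matrix.fromBlocks_mulVec, dot_sum]
    simp only [Sum.elim_comp_inl, Sum.elim_comp_inr, Matrix.zero_mulVec, add_zero, zero_add]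
    have hor : x ∘ Sum.inl ≠ 0 ∨ x ∘ Sum.inr ≠ 0 := by
      by_contra hcon
      push_neg at hcon
      apply hx
      funext i
      cases i with
      | inl a => exact congrFun hcon.1 a
      | inr b => exact congrFun hcon.2 b
    rcases hor with h | h
    · have h1 := hP.dotProduct_mulVec_pos h
      have h2 := hQ.posSemidef.dotProduct_mulVec_nonneg (x ∘ Sum.inr)
      rw [star_pi_real] at h1 h2
      linarith
    · have h1 := hP.posSemidef.dotProduct_mulVec_nonneg (x ∘ Sum.inl)
      have h2 := hQ.dotProduct_mulVec_pos h
      rw [star_pi_real] at h1 h2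
      linarith

lemma posDef_smul_one {c : ℝ} (hc : 0 < c) : (c • (1 : Matrix ι ι ℝ)).PosDef := by
  rw [Matrix.posDef_iff_dotProduct_mulVec]
  constructor
  · rw [Matrix.IsHermitian, Matrix.conjTranspose_smul, Matrix.conjTranspose_one]; rfl
  · intro x hx
    rw [star_pi_real, Matrix.smul_mulVec, Matrix.one_mulVec, dotProduct_smul]
    have : 0 < x ⬝ᵥ x := by
      rcases lt_or_eq_of_le (dot_self_nonneg x) with h | h
      · exact h
      · exact absurd (dotProduct_self_eq_zero.mp h.symm) hx
    exact smul_pos hc this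

lemma posSemidef_smul_one {c : ℝ} (hc : 0 ≤ c) : (c • (1 : Matrix ι ι ℝ)).PosSemidef := by
  rw [Matrix.posSemidef_iff_dotProduct_mulVec]
  constructor
  · rw [Matrix.IsHermitian, Matrix.conjTranspose_smul, Matrix.conjTranspose_one]; rfl
  · intro x
    rw [star_pi_real, Matrix.smul_mulVec, Matrix.one_mulVec, dotProduct_smul]
    exact smul_nonneg hc (dot_self_nonneg x)

/-- The key Cauchy–Schwarz estimate: if `c • 1 ≼ P` then the quadratic form of `P⁻¹` is
bounded by `(1/c)` times the identity form. -/
lemma quad_inv_le {P : Matrix ι ι ℝ} (hP : P.PosDef) {c : ℝ} (hc : 0 < c)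
    (h : ∀ x : ι → ℝ, c * (x ⬝ᵥ x) ≤ x ⬝ᵥ (P *ᵥ x)) (z : ι → ℝ) :
    z ⬝ᵥ (P⁻¹ *ᵥ z) ≤ (1 / c) * (z ⬝ᵥ z) := by
  set w := P⁻¹ *ᵥ z with hw
  have hPz : P *ᵥ w = z := by
    rw [hw, Matrix.mulVec_mulVec, Matrix.mul_nonsing_inv _ hP.det_pos.ne'.isUnit,
      Matrix.one_mulVec]
  have h1 : c * (w ⬝ᵥ w) ≤ w ⬝ᵥ z := by rw [← hPz]; exact h w
  have h2 : (w ⬝ᵥ z) ^ 2 ≤ (w ⬝ᵥ w) * (z ⬝ᵥ z) := dot_sq_le w z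
  have hW := dot_self_nonneg w
  have hZ := dot_self_nonneg z
  have hcomm : z ⬝ᵥ w = w ⬝ᵥ z := dotProduct_comm z w
  rw [hcomm]
  rcases le_or_gt (w ⬝ᵥ z) 0 with hd | hd
  · calc w ⬝ᵥ z ≤ 0 := hd
      _ ≤ (1 / c) * (z ⬝ᵥ z) := by positivity
  · have h3 : c * (w ⬝ᵥ z) ^ 2 ≤ (w ⬝ᵥ z) * (z ⬝ᵥ z) := by nlinarith
    have h4 : c * (w ⬝ᵥ z) ≤ z ⬝ᵥ z := by nlinarith
    calc w ⬝ᵥ z = (1 / c) * (c * (w ⬝ᵥ z)) := by field_simp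
      _ ≤ (1 / c) * (z ⬝ᵥ z) := by
          apply mul_le_mul_of_nonneg_left h4 (by positivity)

lemma bilin_eq {κ' : Type*} [Fintype κ'] {m : ℕ} (M : Matrix (Fin m) κ' ℝ) (v : κ' → ℝ) :
    ∑ j, v j * ∑ j', (∑ r, M r j * M r j') * v j' = (M *ᵥ v) ⬝ᵥ (M *ᵥ v) := by
  have rhs : (M *ᵥ v) ⬝ᵥ (M *ᵥ v) = ∑ j, ∑ j', ∑ r, (M r j * v j) * (M r j' * v j') := by
    simp only [dotProduct, Matrix.mulVec, Finset.sum_mul_sum]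
    rw [Finset.sum_comm]
    exact Finset.sum_congr rfl fun j _ => Finset.sum_comm
  rw [rhs]
  simp only [Finset.sum_mul, Finset.mul_sum]
  exact Finset.sum_congr rfl fun j _ => Finset.sum_congr rfl fun j' _ =>
    Finset.sum_congr rfl fun r _ => by ring

end SpecNormAux

section HxAux
set_option linter.unusedSectionVars false

variable {s' m' : ℕ} {n' : Fin s' → ℕ}

lemma dot_sigma (x y : XIdx n' → ℝ) :
    x ⬝ᵥ y = ∑ i, (blk x i) ⬝ᵥ (blk y i) := by
  rw [dotProduct, ← Finset.univ_sigma_univ, Finset.sum_sigma]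
  rfl

/-- The upper-left block of `H = M0 + M2` for the explicit scheme. -/
def Hxmat (A : ∀ i : Fin s', Matrix (Fin m') (Fin (n' i)) ℝ) (α : Fin s' → ℝ) (β : ℝ) :
    Matrix (XIdx n') (XIdx n') ℝ :=
  Matrix.of fun p q =>
    (if p = q then β / α p.1 else 0) +
    (if p.1 = q.1 then -(β * ∑ r, A p.1 r p.2 * A q.1 r q.2) else 0)

lemma quad_form_Hx (A : ∀ i : Fin s', Matrix (Fin m') (Fin (n' i)) ℝ) (α : Fin s' → ℝ)
    (β : ℝ) (x : XIdx n' → ℝ) :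
    x ⬝ᵥ (Hxmat A α β *ᵥ x) =
      ∑ i, ((β / α i) * (blk x i ⬝ᵥ blk x i)
        - β * ((A i *ᵥ blk x i) ⬝ᵥ (A i *ᵥ blk x i))) := by
  have hsplit : Hxmat A α β = Matrix.diagonal (fun p : XIdx n' => β / α p.1) +
      Matrix.of (fun p q : XIdx n' =>
        if p.1 = q.1 then -(β * ∑ r, A p.1 r p.2 * A q.1 r q.2) else 0) := by
    ext p q
    simp [Hxmat, Matrix.diagonal, Matrix.add_apply]
  rw [hsplit, Matrix.add_mulVec, dotProduct_add]
  have p1 : x ⬝ᵥ ((Matrix.diagonal fun p : XIdx n' => β / α p.1) *ᵥ x)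
      = ∑ i, (β / α i) * (blk x i ⬝ᵥ blk x i) := by
    rw [dotProduct, ← Finset.univ_sigma_univ, Finset.sum_sigma]
    refine Finset.sum_congr rfl fun i _ => ?_
    rw [dotProduct, Finset.mul_sum]
    refine Finset.sum_congr rfl fun j _ => ?_
    rw [Matrix.mulVec_diagonal]
    show x ⟨i, j⟩ * (β / α i * x ⟨i, j⟩) = β / α i * (x ⟨i, j⟩ * x ⟨i, j⟩)
    ring
  have p2 : x ⬝ᵥ ((Matrix.of (fun p q : XIdx n' =>
        if p.1 = q.1 then -(β * ∑ r, A p.1 r p.2 * A q.1 r q.2) else 0)) *ᵥ x)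
      = ∑ i, -(β * ((A i *ᵥ blk x i) ⬝ᵥ (A i *ᵥ blk x i))) := by
    rw [dotProduct, ← Finset.univ_sigma_univ, Finset.sum_sigma]
    refine Finset.sum_congr rfl fun i _ => ?_
    have inner : ∀ j : Fin (n' i),
        ((Matrix.of (fun p q : XIdx n' =>
          if p.1 = q.1 then -(β * ∑ r, A p.1 r p.2 * A q.1 r q.2) else 0)) *ᵥ x) ⟨i, j⟩
        = ∑ j', -(β * ∑ r, A i r j * A i r j') * x ⟨i, j'⟩ := by
      intro j
      show ∑ q : XIdx n', (if (⟨i, j⟩ : XIdx n').1 = q.1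
          then -(β * ∑ r, A i r j * A q.1 r q.2) else 0) * x q = _
      rw [← Finset.univ_sigma_univ, Finset.sum_sigma]
      rw [Finset.sum_eq_single_of_mem i (Finset.mem_univ i)]
      · exact Finset.sum_congr rfl fun j' _ => by simp
      · intro i' _ hne
        apply Finset.sum_eq_zero
        intro j' _
        simp [Ne.symm hne]
    calc ∑ j, x ⟨i, j⟩ * ((Matrix.of (fun p q : XIdx n' =>
          if p.1 = q.1 then -(β * ∑ r, A p.1 r p.2 * A q.1 r q.2) else 0)) *ᵥ x) ⟨i, j⟩
        = ∑ j, x ⟨i, j⟩ * ∑ j', -(β * ∑ r, A i r j * A i r j') * x ⟨i, j'⟩ := by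
          exact Finset.sum_congr rfl fun j _ => by rw [inner j]
      _ = -(β * ∑ j, blk x i j * ∑ j', (∑ r, A i r j * A i r j') * blk x i j') := by
          simp only [blk, neg_mul, mul_neg, Finset.sum_neg_distrib, neg_inj, Finset.mul_sum]
          refine Finset.sum_congr rfl fun j _ => Finset.sum_congr rfl fun j' _ => ?_
          simp only [Finset.sum_mul, Finset.mul_sum]
          exact Finset.sum_congr rfl fun r _ => by ring
      _ = -(β * ((A i *ᵥ blk x i) ⬝ᵥ (A i *ᵥ blk x i))) := by rw [bilin_eq]
  rw [p1, p2, ← Finset.sum_add_distrib]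
  exact Finset.sum_congr rfl fun i _ => by ring

lemma Hxmat_herm (A : ∀ i : Fin s', Matrix (Fin m') (Fin (n' i)) ℝ) (α : Fin s' → ℝ)
    (β : ℝ) : (Hxmat A α β).IsHermitian := by
  show (Hxmat A α β)ᴴ = Hxmat A α β
  ext p q
  rw [Matrix.conjTranspose_apply, star_trivial]
  rcases p with ⟨i, j⟩
  rcases q with ⟨i', j'⟩
  simp only [Hxmat, Matrix.of_apply]
  by_cases h : i = i'
  · subst h
    simp [Sigma.mk.inj_iff, eq_comm, mul_comm]
  · simp [Sigma.mk.inj_iff, h, Ne.symm h]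

end HxAux

/-- if `β > 0` and `0 < α_i < 1/(‖A_i‖₂² + 2‖M̃₂‖₂)` where `M̃₂ = (1/β)M₂`,
then the explicit-scheme matrices `{M₀, M₁, M₂}` satisfy Condition-M. -/
theorem explicit_matrices_conditionM {s m : ℕ} {n : Fin s → ℕ}
    (A : ∀ i : Fin s, Matrix (Fin m) (Fin (n i)) ℝ)
    (α : Fin s → ℝ) (β : ℝ) (hβ : 0 < β)
    (hα : ∀ i, 0 < α i ∧
      α i < 1 / (specNorm (A i) ^ 2 + 2 * specNorm ((1 / β) • M2mat A β))) :
    ConditionM (M0exp A α β) (M1exp A α β) (M2mat A β) := by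
  classical
  constructor
  · -- M0 = M1 + M2
    ext i j
    rcases i with p | r <;> rcases j with q | r' <;>
      simp only [M0exp, M1exp, M2mat, Matrix.add_apply, Matrix.fromBlocks_apply₁₁,
        Matrix.fromBlocks_apply₁₂, Matrix.fromBlocks_apply₂₁, Matrix.fromBlocks_apply₂₂,
        Matrix.of_apply, Matrix.zero_apply, add_zero, zero_add]
    split_ifs <;> ring
  · -- Condition (ii) and (iii)
    set t := specNorm ((1 / β) • M2mat A β) with ht
    have htnn : 0 ≤ t := specNorm_nonneg _
    have hkey : ∀ i, specNorm (A i) ^ 2 + 2 * t < 1 / α i := by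
      intro i
      rcases hα i with ⟨h1, h2⟩
      have hDpos : 0 < specNorm (A i) ^ 2 + 2 * t := by
        by_contra hcon
        push_neg at hcon
        have h0 : specNorm (A i) ^ 2 + 2 * t = 0 :=
          le_antisymm hcon (by positivity)
        rw [h0] at h2
        norm_num at h2
        linarith
      have h3 : α i * (specNorm (A i) ^ 2 + 2 * t) < 1 := (lt_div_iff₀ hDpos).mp h2
      rw [lt_div_iff₀ h1, mul_comm]
      exact h3
    -- the uniform spectral gap `c`
    set cs : Finset ℝ := insert (2 * β * t + 1)
        (Finset.univ.image fun i : Fin s => β * (1 / α i - specNorm (A i) ^ 2)) with hcs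
    have hcs_ne : cs.Nonempty := ⟨_, Finset.mem_insert_self _ _⟩
    set c : ℝ := cs.min' hcs_ne with hc
    have hc_gt : 2 * β * t < c := by
      rw [hc, Finset.lt_min'_iff]
      intro y hy
      rw [hcs] at hy
      rcases Finset.mem_insert.mp hy with h | h
      · rw [h]; linarith
      · obtain ⟨i, _, rfl⟩ := Finset.mem_image.mp h
        have := hkey i
        nlinarith [specNorm_nonneg (A i)]
    have hc_pos : 0 < c := lt_of_le_of_lt (by positivity) hc_gt
    have hc_le : ∀ i, c ≤ β * (1 / α i - specNorm (A i) ^ 2) := fun i =>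
      Finset.min'_le _ _ (Finset.mem_insert_of_mem
        (Finset.mem_image_of_mem _ (Finset.mem_univ i)))
    -- the quadratic form of `Hx` dominates `c` times the identity
    have hge : ∀ x : XIdx n → ℝ, c * (x ⬝ᵥ x) ≤ x ⬝ᵥ (Hxmat A α β *ᵥ x) := by
      intro x
      rw [quad_form_Hx, dot_sigma x x, Finset.mul_sum]
      apply Finset.sum_le_sum
      intro i _
      have hAi := dot_mulVec_le (A i) (blk x i)
      have hD := dot_self_nonneg (blk x i)
      have hci := hc_le i
      have hdiv : β / α i = β * (1 / α i) := by ring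
      rw [hdiv]
      nlinarith [mul_le_mul_of_nonneg_right hci hD,
        mul_le_mul_of_nonneg_left hAi hβ.le]
    have hXpd : (Hxmat A α β).PosDef := by
      refine Matrix.PosDef.of_dotProduct_mulVec_pos (Hxmat_herm A α β) fun x hx => ?_
      rw [star_pi_real]
      have h2 : 0 < x ⬝ᵥ x := by
        rcases lt_or_eq_of_le (dot_self_nonneg x) with h | h
        · exact h
        · exact absurd (dotProduct_self_eq_zero.mp h.symm) hx
      calc (0:ℝ) < c * (x ⬝ᵥ x) := by positivity
        _ ≤ _ := hge x
    have hinvβ : (0:ℝ) < 1 / β := by positivity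
    have hHeq : M0exp A α β + M2mat A β
        = Matrix.fromBlocks (Hxmat A α β) 0 0
            ((1 / β) • (1 : Matrix (Fin m) (Fin m) ℝ)) := by
      ext i j
      rcases i with p | r <;> rcases j with q | r' <;>
        simp only [M0exp, M2mat, Hxmat, Matrix.add_apply, Matrix.fromBlocks_apply₁₁,
          Matrix.fromBlocks_apply₁₂, Matrix.fromBlocks_apply₂₁, Matrix.fromBlocks_apply₂₂,
          Matrix.of_apply, Matrix.zero_apply, add_zero, zero_add]
      rcases lt_trichotomy (p.1 : Fin s) q.1 with hlt | heq | hgt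
      · have hne : p ≠ q := fun hpq => absurd (hpq ▸ rfl) hlt.ne
        simp [hlt, hlt.le, hlt.ne, hne]
      · have hnlt : ¬ p.1 < q.1 := by rw [heq]; exact lt_irrefl _
        simp [heq, heq.le, hnlt]
      · have hne : p ≠ q := fun hpq => absurd (hpq ▸ rfl) hgt.ne'
        have h1 : ¬ p.1 ≤ q.1 := not_le.mpr hgt
        have h2 : ¬ p.1 < q.1 := asymm hgt
        simp [h1, h2, hne, hgt.ne']
    have hHpd : (M0exp A α β + M2mat A β).PosDef := by
      rw [hHeq]
      exact posDef_fromBlocks_diag hXpd (posDef_smul_one hinvβ)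
    refine ⟨hHpd, ?_⟩
    have hXdet : IsUnit (Hxmat A α β).det := hXpd.det_pos.ne'.isUnit
    have hinv : (M0exp A α β + M2mat A β)⁻¹
        = Matrix.fromBlocks (Hxmat A α β)⁻¹ 0 0 (β • 1) := by
      apply Matrix.inv_eq_right_inv
      rw [hHeq, Matrix.fromBlocks_multiply]
      rw [Matrix.mul_nonsing_inv _ hXdet]
      simp only [Matrix.mul_zero, Matrix.zero_mul, add_zero, zero_add,
        Matrix.smul_mul, Matrix.one_mul, smul_smul]
      rw [one_div, inv_mul_cancel₀ hβ.ne', one_smul, Matrix.fromBlocks_one]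
    set Sx := hXpd.inv.posSemidef.sqrt with hSxdef
    have hSxps : Sx.PosSemidef := hXpd.inv.posSemidef.posSemidef_sqrt
    have hSxsq : Sx * Sx = (Hxmat A α β)⁻¹ := hXpd.inv.posSemidef.sqrt_mul_self
    have hTps : (Matrix.fromBlocks Sx 0 0 (Real.sqrt β • 1)
        : Matrix (FIdx n m) (FIdx n m) ℝ).PosSemidef :=
      posSemidef_fromBlocks_diag hSxps (posSemidef_smul_one (Real.sqrt_nonneg β))
    have hTsq : (Matrix.fromBlocks Sx 0 0 (Real.sqrt β • 1)
        : Matrix (FIdx n m) (FIdx n m) ℝ) ^ 2 = (M0exp A α β + M2mat A β)⁻¹ := by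
      rw [pow_two, Matrix.fromBlocks_multiply, hinv]
      simp only [Matrix.mul_zero, Matrix.zero_mul, add_zero, zero_add, hSxsq,
        Matrix.smul_mul, Matrix.mul_smul, Matrix.one_mul, smul_smul, smul_zero,
        Real.mul_self_sqrt hβ.le]
    have hsqrt_eq : hHpd.inv.posSemidef.sqrt
        = Matrix.fromBlocks Sx 0 0 (Real.sqrt β • 1) :=
      (hTps.eq_sqrt_of_sq_eq hHpd.inv.posSemidef hTsq).symm
    rw [hsqrt_eq]
    set Bx : Matrix (XIdx n) (XIdx n) ℝ := Matrix.of fun p q =>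
      if p.1 < q.1 then β * ∑ r, A p.1 r p.2 * A q.1 r q.2 else 0 with hBxdef
    have hM2eq : M2mat A β = Matrix.fromBlocks Bx 0 0 0 := rfl
    have hprod : Matrix.fromBlocks Sx 0 0 (Real.sqrt β • 1) * M2mat A β *
        Matrix.fromBlocks Sx 0 0 (Real.sqrt β • 1)
        = Matrix.fromBlocks (Sx * Bx * Sx) 0 0 0 := by
      rw [hM2eq, Matrix.fromBlocks_multiply, Matrix.fromBlocks_multiply]
      simp [Matrix.smul_mul, Matrix.mul_smul]
    rw [hprod]
    -- norm of the off-diagonal block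
    have hBnorm : specNorm Bx ≤ β * t := by
      have hsmul : (1 / β) • M2mat A β
          = Matrix.fromBlocks ((1 / β) • Bx) 0 0 (0 : Matrix (Fin m) (Fin m) ℝ) := by
        rw [hM2eq, Matrix.fromBlocks_smul]
        simp
      have h1 : specNorm ((1 / β) • Bx) ≤ t := by
        rw [ht, hsmul]
        exact specNorm_le_fromBlocks _
      have h2 : specNorm Bx = β * specNorm ((1 / β) • Bx) := by
        rw [specNorm_smul, abs_of_pos hinvβ]
        field_simp
      rw [h2]
      exact mul_le_mul_of_nonneg_left h1 hβ.le
    -- quadratic bound for Sx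
    have hSxquad : ∀ z : XIdx n → ℝ, (Sx *ᵥ z) ⬝ᵥ (Sx *ᵥ z) ≤ (1 / c) * (z ⬝ᵥ z) := by
      intro z
      have hstep : (Sx *ᵥ z) ⬝ᵥ (Sx *ᵥ z) = z ⬝ᵥ ((Hxmat A α β)⁻¹ *ᵥ z) := by
        rw [Matrix.dotProduct_mulVec, ← Matrix.mulVec_transpose, herm_transpose hSxps.1,
          Matrix.mulVec_mulVec, hSxsq, dotProduct_comm]
      rw [hstep]
      exact quad_inv_le hXpd hc_pos hge z
    have hfinal : specNorm (Sx * Bx * Sx) ≤ (1 / c) * (β * t) := by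
      refine specNorm_le_of (by positivity) fun x => ?_
      rw [← Matrix.mulVec_mulVec, ← Matrix.mulVec_mulVec]
      set u := Sx *ᵥ x with hu
      set v := Bx *ᵥ u with hv
      have e1 : (Sx *ᵥ v) ⬝ᵥ (Sx *ᵥ v) ≤ (1 / c) * (v ⬝ᵥ v) := hSxquad v
      have e2 : v ⬝ᵥ v ≤ specNorm Bx ^ 2 * (u ⬝ᵥ u) := dot_mulVec_le Bx u
      have e3 : u ⬝ᵥ u ≤ (1 / c) * (x ⬝ᵥ x) := hSxquad x
      have e4 : specNorm Bx ^ 2 ≤ (β * t) ^ 2 :=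
        pow_le_pow_left₀ (specNorm_nonneg _) hBnorm 2
      calc (Sx *ᵥ v) ⬝ᵥ (Sx *ᵥ v) ≤ (1 / c) * (v ⬝ᵥ v) := e1
        _ ≤ (1 / c) * (specNorm Bx ^ 2 * (u ⬝ᵥ u)) :=
            mul_le_mul_of_nonneg_left e2 (by positivity)
        _ ≤ (1 / c) * ((β * t) ^ 2 * ((1 / c) * (x ⬝ᵥ x))) := by
            have h5 : specNorm Bx ^ 2 * (u ⬝ᵥ u) ≤ (β * t) ^ 2 * ((1 / c) * (x ⬝ᵥ x)) := by
              nlinarith [dot_self_nonneg u, dot_self_nonneg x, sq_nonneg (β * t),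
                sq_nonneg (specNorm Bx)]
            exact mul_le_mul_of_nonneg_left h5 (by positivity)
        _ = ((1 / c) * (β * t)) ^ 2 * (x ⬝ᵥ x) := by ring
    calc specNorm (Matrix.fromBlocks (Sx * Bx * Sx) 0 0
          (0 : Matrix (Fin m) (Fin m) ℝ)) ≤ specNorm (Sx * Bx * Sx) :=
          specNorm_fromBlocks_le _
      _ ≤ (1 / c) * (β * t) := hfinal
      _ < 1 / 2 := by
          have h6 : (1 / c) * (β * t) = (β * t) / c := by ring
          rw [h6, div_lt_iff₀ hc_pos]
          linarith

end
end
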